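/- Let (V₁,V₂) be bivariate standard Gaussian with correlation ρ ∈ (-1,1). The probability P(V₁ ≤ p₁, V₂ ≤ p₂) is strictly increasing in the correlation parameter ρ, for any fixed p₁, p₂ ∈ ℝ. Consequently, the probabilities of the two regions {V₁ ≤ p₁, V₂ ≤ p₂} and {V₁ ≥ p₁, V₂ ≥ p₂} uniquely determine ρ given the marginal parameters. -/

import Mathlib

open MeasureTheory ProbabilityTheory Set Filter Real

noncomputable def slepGd (x : ℝ) : ℝ := (Real.sqrt (2 * π))⁻¹ * Real.exp (-x^2/2)

lemma slepGd_eq : gaussianPDFReal 0 1 = slepGd := by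
  ext x
  simp [gaussianPDFReal, slepGd]

lemma slepGd_pos (x : ℝ) : 0 < slepGd x := by
  have := Real.sqrt_pos.2 (by positivity : (0:ℝ) < 2 * π)
  exact mul_pos (by positivity) (Real.exp_pos _)

lemma slepGd_cont : Continuous slepGd := by
  unfold slepGd; fun_prop

lemma slepGd_int : Integrable slepGd := by
  rw [← slepGd_eq]; exact integrable_gaussianPDFReal 0 1

lemma slepGd_le (x : ℝ) : slepGd x ≤ 1 := by
  have h1 : (1:ℝ) ≤ Real.sqrt (2 * π) := by
    rw [show (1:ℝ) = Real.sqrt 1 by simp]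
    exact Real.sqrt_le_sqrt (by nlinarith [Real.pi_gt_three])
  have h2 : Real.exp (-x^2/2) ≤ 1 := by
    rw [Real.exp_le_one_iff]
    nlinarith [sq_nonneg x]
  calc slepGd x ≤ (Real.sqrt (2*π))⁻¹ * 1 :=
        mul_le_mul_of_nonneg_left h2 (by positivity)
    _ ≤ 1 := by rw [mul_one]; exact inv_le_one_of_one_le₀ h1

noncomputable def slepPhi (t : ℝ) : ℝ := ∫ x in Iic t, slepGd x

lemma slepPhi_hasDeriv (t : ℝ) : HasDerivAt slepPhi (slepGd t) t := by
  have h : ∀ u, slepPhi u = slepPhi 0 + ∫ x in (0:ℝ)..u, slepGd x := by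
    intro u
    rw [← intervalIntegral.integral_Iic_sub_Iic slepGd_int.integrableOn slepGd_int.integrableOn]
    unfold slepPhi; ring
  have hd : HasDerivAt (fun u => slepPhi 0 + ∫ x in (0:ℝ)..u, slepGd x) (slepGd t) t := by
    refine HasDerivAt.const_add _ ?_
    exact intervalIntegral.integral_hasDerivAt_right slepGd_int.intervalIntegrable
      slepGd_cont.stronglyMeasurable.stronglyMeasurableAtFilter
      slepGd_cont.continuousAt
  exact hd.congr_deriv rfl |>.congr_of_eventuallyEq (by filter_upwards with u; exact h u)

lemma slepPhi_nonneg (t : ℝ) : 0 ≤ slepPhi t :=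
  integral_nonneg fun x => (slepGd_pos x).le

lemma slepPhi_le_one (t : ℝ) : slepPhi t ≤ 1 := by
  have h1 : slepPhi t ≤ ∫ x, slepGd x := by
    refine setIntegral_le_integral slepGd_int (ae_of_all _ fun x => (slepGd_pos x).le)
  have h2 : ∫ x, slepGd x = 1 := by
    rw [← slepGd_eq]; exact integral_gaussianPDFReal_eq_one 0 one_ne_zero
  linarith

lemma slepPhi_cont : Continuous slepPhi :=
  continuous_iff_continuousAt.2 fun t => (slepPhi_hasDeriv t).continuousAt



lemma slep_integrand_int (p₁ p₂ ρ c : ℝ) (hc : c ≠ 0) :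
    IntegrableOn (fun x => slepPhi ((p₂ - ρ*x)/c) * slepGd x) (Iic p₁) := by
  refine Integrable.mono slepGd_int.integrableOn ?_ ?_
  · exact ((slepPhi_cont.comp (by fun_prop)).mul slepGd_cont).aestronglyMeasurable
  · filter_upwards with x
    rw [Real.norm_eq_abs, Real.norm_eq_abs, abs_of_nonneg (slepGd_pos x).le,
      abs_of_nonneg (mul_nonneg (slepPhi_nonneg _) (slepGd_pos x).le)]
    calc slepPhi ((p₂ - ρ*x)/c) * slepGd x ≤ 1 * slepGd x :=
          mul_le_mul_of_nonneg_right (slepPhi_le_one _) (slepGd_pos x).le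
      _ = slepGd x := one_mul _

lemma slep_measure_eq (p₁ p₂ ρ : ℝ) (hs : 0 < Real.sqrt (1 - ρ^2)) :
    ((gaussianReal 0 1).prod (gaussianReal 0 1))
      {w : ℝ × ℝ | w.1 ≤ p₁ ∧ ρ * w.1 + Real.sqrt (1 - ρ^2) * w.2 ≤ p₂}
    = ENNReal.ofReal
      (∫ x in Iic p₁, slepPhi ((p₂ - ρ*x)/Real.sqrt (1 - ρ^2)) * slepGd x) := by
  set c := Real.sqrt (1 - ρ^2) with hcdef
  have hA : MeasurableSet {w : ℝ × ℝ | w.1 ≤ p₁ ∧ ρ * w.1 + c * w.2 ≤ p₂} := by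
    apply MeasurableSet.inter
    · exact measurableSet_le measurable_fst measurable_const
    · have : Continuous fun w : ℝ × ℝ => ρ * w.1 + c * w.2 := by fun_prop
      exact measurableSet_le this.measurable measurable_const
  rw [Measure.prod_apply hA]
  have hslice : ∀ x : ℝ, (gaussianReal 0 1) (Prod.mk x ⁻¹' {w : ℝ × ℝ | w.1 ≤ p₁ ∧ ρ * w.1 + c * w.2 ≤ p₂})
      = (Iic p₁).indicator (fun x => ENNReal.ofReal (slepPhi ((p₂ - ρ*x)/c))) x := by
    intro x
    by_cases hx : x ≤ p₁
    · rw [indicator_of_mem (show x ∈ Iic p₁ from hx)]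
      have : (Prod.mk x ⁻¹' {w : ℝ × ℝ | w.1 ≤ p₁ ∧ ρ * w.1 + c * w.2 ≤ p₂}) = Iic ((p₂ - ρ*x)/c) := by
        ext y
        simp only [mem_preimage, mem_setOf_eq, mem_Iic, hx, true_and]
        rw [le_div_iff₀ hs]
        constructor <;> intro h <;> nlinarith
      rw [this, gaussianReal_apply_eq_integral 0 one_ne_zero, slepGd_eq]
      rfl
    · rw [indicator_of_notMem (show x ∉ Iic p₁ from hx)]
      have : (Prod.mk x ⁻¹' {w : ℝ × ℝ | w.1 ≤ p₁ ∧ ρ * w.1 + c * w.2 ≤ p₂}) = ∅ := by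
        ext y; simp [hx]
      simp [this]
  simp_rw [hslice]
  rw [lintegral_indicator measurableSet_Iic _]
  have hgr : gaussianReal 0 1 = volume.withDensity (gaussianPDF 0 1) :=
    gaussianReal_of_var_ne_zero 0 one_ne_zero
  have hmeas : Measurable fun x : ℝ => ENNReal.ofReal (slepPhi ((p₂ - ρ*x)/c)) :=
    ENNReal.measurable_ofReal.comp (slepPhi_cont.comp (by fun_prop : Continuous fun x : ℝ => (p₂ - ρ*x)/c)).measurable
  rw [hgr, restrict_withDensity measurableSet_Iic, lintegral_withDensity_eq_lintegral_mul _
    (measurable_gaussianPDF 0 1) hmeas]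
  have : ∀ x : ℝ, (gaussianPDF 0 1 * fun x => ENNReal.ofReal (slepPhi ((p₂ - ρ*x)/c))) x
      = ENNReal.ofReal (slepPhi ((p₂ - ρ*x)/c) * slepGd x) := by
    intro x
    simp only [Pi.mul_apply, gaussianPDF, slepGd_eq]
    rw [← ENNReal.ofReal_mul (slepGd_pos x).le, mul_comm]
  simp_rw [this]
  rw [← ofReal_integral_eq_lintegral_ofReal
    (slep_integrand_int p₁ p₂ ρ c hs.ne')
    (ae_of_all _ fun x => mul_nonneg (slepPhi_nonneg _) (slepGd_pos x).le)]



/-- the ρ-derivative of the integrand -/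
noncomputable def slepHd (p₂ ρ x : ℝ) : ℝ :=
  slepGd ((p₂ - ρ*x)/Real.sqrt (1-ρ^2)) * ((ρ*p₂ - x)/(Real.sqrt (1-ρ^2))^3) * slepGd x

/-- the bivariate density as antiderivative in x -/
noncomputable def slepK (p₂ ρ x : ℝ) : ℝ :=
  (2*π*Real.sqrt (1-ρ^2))⁻¹ * Real.exp (-(x^2 - 2*ρ*p₂*x + p₂^2)/(2*(1-ρ^2)))

lemma slepK_pos (p₂ ρ x : ℝ) (h : 0 < 1 - ρ^2) : 0 < slepK p₂ ρ x := by
  have := Real.sqrt_pos.2 h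
  unfold slepK; positivity

lemma slep_sqrt_hasDeriv {ρ : ℝ} (h : 0 < 1 - ρ^2) :
    HasDerivAt (fun ρ => Real.sqrt (1-ρ^2)) (-ρ/Real.sqrt (1-ρ^2)) ρ := by
  have h1 : HasDerivAt (fun ρ : ℝ => 1 - ρ^2) (-(2*ρ)) ρ := by
    simpa using ((hasDerivAt_pow 2 ρ).const_sub 1)
  have := h1.sqrt h.ne'
  convert this using 1
  field_simp
lemma slep_u_hasDeriv {ρ : ℝ} (h : 0 < 1 - ρ^2) (p₂ x : ℝ) :
    HasDerivAt (fun ρ => (p₂ - ρ*x)/Real.sqrt (1-ρ^2))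
      ((ρ*p₂ - x)/(Real.sqrt (1-ρ^2))^3) ρ := by
  have hc : 0 < Real.sqrt (1-ρ^2) := Real.sqrt_pos.2 h
  have hc2 : Real.sqrt (1-ρ^2)^2 = 1 - ρ^2 := Real.sq_sqrt h.le
  have h1 : HasDerivAt (fun ρ : ℝ => p₂ - ρ*x) (-x) ρ := by
    simpa using ((hasDerivAt_id ρ).mul_const x).const_sub p₂
  have := h1.div (slep_sqrt_hasDeriv h) hc.ne'
  refine this.congr_deriv (Eq.symm ?_)
  set c := Real.sqrt (1-ρ^2)
  field_simp
  linear_combination x * hc2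
lemma slepHd_hasDeriv {ρ : ℝ} (h : 0 < 1 - ρ^2) (p₂ x : ℝ) :
    HasDerivAt (fun ρ => slepPhi ((p₂ - ρ*x)/Real.sqrt (1-ρ^2)) * slepGd x)
      (slepHd p₂ ρ x) ρ := by
  have h1 := (slepPhi_hasDeriv ((p₂ - ρ*x)/Real.sqrt (1-ρ^2))).comp ρ (slep_u_hasDeriv h p₂ x)
  exact h1.mul_const (slepGd x)

lemma slepHd_bound {ρ x : ℝ} (hρ : |ρ| ≤ 1) {c : ℝ} (hc : 0 < c)
    (hcs : c ≤ Real.sqrt (1-ρ^2)) (p₂ : ℝ) :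
    ‖slepHd p₂ ρ x‖ ≤ (|p₂| + |x|)/c^3 * slepGd x := by
  have hs : 0 < Real.sqrt (1-ρ^2) := lt_of_lt_of_le hc hcs
  unfold slepHd
  rw [norm_mul, norm_mul, Real.norm_eq_abs, Real.norm_eq_abs, Real.norm_eq_abs,
    abs_of_pos (slepGd_pos _), abs_of_pos (slepGd_pos _), abs_div,
    abs_of_pos (pow_pos hs 3)]
  have h1 : |ρ*p₂ - x| ≤ |p₂| + |x| := by
    calc |ρ*p₂ - x| ≤ |ρ*p₂| + |x| := abs_sub _ _
      _ ≤ |p₂| + |x| := by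
          rw [abs_mul]
          have : |ρ| * |p₂| ≤ 1 * |p₂| := mul_le_mul_of_nonneg_right hρ (abs_nonneg _)
          linarith [this]
  have h2 : |ρ*p₂ - x| / Real.sqrt (1-ρ^2)^3 ≤ (|p₂| + |x|)/c^3 := by
    apply div_le_div₀ (by positivity) h1 (by positivity)
    exact pow_le_pow_left₀ hc.le hcs 3
  calc slepGd ((p₂-ρ*x)/Real.sqrt (1-ρ^2)) * (|ρ*p₂ - x| / Real.sqrt (1-ρ^2)^3) * slepGd x
      ≤ 1 * ((|p₂| + |x|)/c^3) * slepGd x := by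
        apply mul_le_mul_of_nonneg_right _ (slepGd_pos x).le
        exact mul_le_mul (slepGd_le _) h2 (by positivity) zero_le_one
    _ = (|p₂| + |x|)/c^3 * slepGd x := by ring

lemma slep_bound_int (p₂ c : ℝ) : Integrable (fun x => (|p₂| + |x|)/c^3 * slepGd x) := by
  have h1 : Integrable (fun x : ℝ => |x| * Real.exp (-x^2/2)) := by
    have := (integrable_mul_exp_neg_mul_sq (by norm_num : (0:ℝ) < 1/2)).abs
    refine this.congr (ae_of_all _ fun x => ?_)
    show |x * Real.exp (-(1/2)*x^2)| = |x| * Real.exp (-x^2/2)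
    rw [show (-(1/2:ℝ)*x^2) = -x^2/2 by ring, abs_mul, abs_of_pos (Real.exp_pos _)]
  have h2 : Integrable (fun x : ℝ => |x| * slepGd x) := by
    have := h1.const_mul (Real.sqrt (2*π))⁻¹
    refine this.congr (ae_of_all _ fun x => ?_)
    unfold slepGd; ring
  have h3 := (slepGd_int.const_mul |p₂|).add h2
  have := h3.const_mul (c^3)⁻¹
  refine this.congr (ae_of_all _ fun x => ?_)
  simp only [Pi.add_apply]
  ring

lemma slepK_hasDeriv {ρ : ℝ} (h : 0 < 1 - ρ^2) (p₂ x : ℝ) :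
    HasDerivAt (fun x => slepK p₂ ρ x) (slepHd p₂ ρ x) x := by
  have hc : 0 < Real.sqrt (1-ρ^2) := Real.sqrt_pos.2 h
  have hc2 : Real.sqrt (1-ρ^2)^2 = 1 - ρ^2 := Real.sq_sqrt h.le
  have h2π : Real.sqrt (2*π) * Real.sqrt (2*π) = 2*π :=
    Real.mul_self_sqrt (by positivity)
  set c := Real.sqrt (1-ρ^2) with hcdef
  have hf : HasDerivAt (fun x => -(x^2 - 2*ρ*p₂*x + p₂^2)/(2*(1-ρ^2)))
      ((ρ*p₂ - x)/(1-ρ^2)) x := by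
    have hp : HasDerivAt (fun x : ℝ => x^2 - 2*ρ*p₂*x + p₂^2) (2*x - 2*ρ*p₂) x := by
      have := ((hasDerivAt_pow 2 x).sub ((hasDerivAt_id x).const_mul (2*ρ*p₂))).add_const (p₂^2)
      simpa using this
    have := (hp.neg).div_const (2*(1-ρ^2))
    refine this.congr_deriv (Eq.symm ?_)
    field_simp
    ring
  have he := (Real.hasDerivAt_exp _).comp x hf
  have := he.const_mul ((2*π*c)⁻¹)
  refine this.congr_deriv (Eq.symm ?_)
  unfold slepHd slepGd
  rw [← hcdef]
  have hexp : Real.exp (-((p₂ - ρ*x)/c)^2/2) * Real.exp (-x^2/2)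
      = Real.exp (-(x^2 - 2*ρ*p₂*x + p₂^2)/(2*(1-ρ^2))) := by
    rw [← Real.exp_add]
    congr 1
    rw [div_pow, hc2]
    field_simp
    ring
  have hc3 : c^3 = c * (1-ρ^2) := by
    rw [pow_succ, hc2]; ring
  show (Real.sqrt (2*π))⁻¹ * Real.exp (-((p₂ - ρ*x)/c)^2/2) * ((ρ*p₂ - x)/c^3)
      * ((Real.sqrt (2*π))⁻¹ * Real.exp (-x^2/2))
    = (2*π*c)⁻¹ * (((fun x => Real.exp x) ∘ fun x => -(x^2 - 2*ρ*p₂*x + p₂^2)/(2*(1-ρ^2))) x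
        * ((ρ*p₂ - x)/(1-ρ^2)))
  simp only [Function.comp_apply]
  rw [← hexp, hc3]
  generalize Real.exp (-((p₂ - ρ*x)/c)^2/2) = A
  generalize Real.exp (-x^2/2) = B
  have hπ : Real.sqrt (2*π) ≠ 0 := by positivity
  have hd : (1:ℝ) - ρ^2 ≠ 0 := h.ne'
  generalize hS : Real.sqrt (2*π) = S at h2π hπ ⊢
  rw [← h2π]
  field_simp

lemma slepK_tendsto (p₂ ρ : ℝ) (h : 0 < 1 - ρ^2) :
    Tendsto (fun x => slepK p₂ ρ x) atBot (nhds 0) := by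
  unfold slepK
  rw [show (0:ℝ) = (2*π*Real.sqrt (1-ρ^2))⁻¹ * 0 by ring]
  apply Tendsto.const_mul
  apply Real.tendsto_exp_atBot.comp
  have hq : Tendsto (fun x : ℝ => x^2 - 2*ρ*p₂*x + p₂^2) atBot atTop := by
    have h1 : Tendsto (fun x : ℝ => x - ρ*p₂) atBot atBot := tendsto_atBot_add_const_right _ _ tendsto_id
    have h2 : Tendsto (fun x : ℝ => |x - ρ*p₂|) atBot atTop := tendsto_abs_atBot_atTop.comp h1
    have h3 : Tendsto (fun x : ℝ => |x - ρ*p₂|^2) atBot atTop :=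
      (tendsto_pow_atTop (two_ne_zero)).comp h2
    have h4 : Tendsto (fun x : ℝ => (x - ρ*p₂)^2 + (p₂^2 - ρ^2*p₂^2)) atBot atTop := by
      apply tendsto_atTop_add_const_right
      refine h3.congr fun x => by rw [sq_abs]
    refine h4.congr fun x => by ring
  have h5 : Tendsto (fun x : ℝ => (x^2 - 2*ρ*p₂*x + p₂^2) * (-(2*(1-ρ^2))⁻¹)) atBot atBot :=
    hq.atTop_mul_const_of_neg (neg_lt_zero.2 (by positivity))
  refine h5.congr fun x => ?_
  field_simp

lemma slepHd_integral {ρ : ℝ} (h : 0 < 1 - ρ^2) (p₁ p₂ : ℝ) :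
    ∫ x in Iic p₁, slepHd p₂ ρ x = slepK p₂ ρ p₁ := by
  have hc : 0 < Real.sqrt (1-ρ^2) := Real.sqrt_pos.2 h
  have hint : IntegrableOn (fun x => slepHd p₂ ρ x) (Iic p₁) := by
    refine Integrable.mono ((slep_bound_int p₂ (Real.sqrt (1-ρ^2))).integrableOn) ?_ ?_
    · refine Continuous.aestronglyMeasurable ?_
      unfold slepHd
      exact ((slepGd_cont.comp (by fun_prop)).mul (by fun_prop)).mul slepGd_cont
    · filter_upwards with x
      rw [Real.norm_eq_abs ((|p₂| + |x|)/_ * _),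
        abs_of_nonneg (mul_nonneg (by positivity) (slepGd_pos x).le)]
      exact slepHd_bound (abs_le.2 ⟨by nlinarith [sq_nonneg ρ], by nlinarith [sq_nonneg ρ]⟩) hc le_rfl p₂
  have := integral_Iic_of_hasDerivAt_of_tendsto' (a := p₁)
    (fun x _ => slepK_hasDeriv h p₂ x) hint (slepK_tendsto p₂ ρ h)
  simpa using this



lemma slepF_hasDeriv (p₁ p₂ : ℝ) {ρ₀ : ℝ} (hρ₀ : ρ₀ ∈ Set.Ioo (-1:ℝ) 1) :
    HasDerivAt (fun ρ => ∫ x in Iic p₁, slepPhi ((p₂ - ρ*x)/Real.sqrt (1-ρ^2)) * slepGd x)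
      (slepK p₂ ρ₀ p₁) ρ₀ := by
  obtain ⟨h1, h2⟩ := hρ₀
  have habs : |ρ₀| < 1 := abs_lt.2 ⟨by linarith, h2⟩
  set ε := (1 - |ρ₀|)/2 with hε
  set r := (1 + |ρ₀|)/2 with hr
  have hεpos : 0 < ε := by rw [hε]; linarith
  have hr1 : r < 1 := by rw [hr]; linarith
  have hrpos : 0 < r := by rw [hr]; positivity
  have hr2 : 0 < 1 - r^2 := by nlinarith
  set csq := Real.sqrt (1 - r^2) with hcsq
  have hcsqpos : 0 < csq := Real.sqrt_pos.2 hr2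
  have hball : ∀ ρ ∈ Metric.ball ρ₀ ε, |ρ| ≤ r ∧ 0 < 1 - ρ^2 ∧ csq ≤ Real.sqrt (1-ρ^2) := by
    intro ρ hρ
    rw [Metric.mem_ball, Real.dist_eq] at hρ
    have hle : |ρ| ≤ r := by
      calc |ρ| = |ρ₀ + (ρ - ρ₀)| := by ring_nf
        _ ≤ |ρ₀| + |ρ - ρ₀| := abs_add_le _ _
        _ ≤ |ρ₀| + ε := by linarith
        _ = r := by rw [hε, hr]; ring
    have h12 : 0 < 1 - ρ^2 := by
      nlinarith [sq_abs ρ, mul_le_mul hle hle (abs_nonneg ρ) hrpos.le]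
    refine ⟨hle, h12, Real.sqrt_le_sqrt ?_⟩
    nlinarith [sq_abs ρ, mul_le_mul hle hle (abs_nonneg ρ) hrpos.le]
  have h0 : 0 < 1 - ρ₀^2 := (hball ρ₀ (Metric.mem_ball_self hεpos)).2.1
  have key := hasDerivAt_integral_of_dominated_loc_of_deriv_le (μ := volume.restrict (Iic p₁))
    (x₀ := ρ₀) (F := fun ρ x => slepPhi ((p₂ - ρ*x)/Real.sqrt (1-ρ^2)) * slepGd x)
    (F' := fun ρ x => slepHd p₂ ρ x)
    (bound := fun x => (|p₂| + |x|)/csq^3 * slepGd x) (Metric.ball_mem_nhds ρ₀ hεpos)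
    ?_ ?_ ?_ ?_ ?_ ?_
  · have := key.2
    rwa [slepHd_integral h0 p₁ p₂] at this
  · refine Filter.Eventually.of_forall fun ρ => ?_
    exact ((slepPhi_cont.comp (by fun_prop)).mul slepGd_cont).aestronglyMeasurable
  · exact slep_integrand_int p₁ p₂ ρ₀ _ (Real.sqrt_pos.2 h0).ne'
  · refine Continuous.aestronglyMeasurable ?_
    unfold slepHd
    exact ((slepGd_cont.comp (by fun_prop)).mul (by fun_prop)).mul slepGd_cont
  · refine ae_of_all _ fun x ρ hρ => ?_
    obtain ⟨ha, hb, hc⟩ := hball ρ hρ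
    exact slepHd_bound (le_trans ha hr1.le) hcsqpos hc p₂
  · exact (slep_bound_int p₂ csq).integrableOn
  · refine ae_of_all _ fun x ρ hρ => ?_
    exact slepHd_hasDeriv (hball ρ hρ).2.1 p₂ x

lemma slepF_strictMono (p₁ p₂ : ℝ) :
    StrictMonoOn (fun ρ => ∫ x in Iic p₁, slepPhi ((p₂ - ρ*x)/Real.sqrt (1-ρ^2)) * slepGd x)
      (Set.Ioo (-1:ℝ) 1) := by
  apply strictMonoOn_of_deriv_pos (convex_Ioo _ _)
  · exact fun ρ hρ => (slepF_hasDeriv p₁ p₂ hρ).continuousAt.continuousWithinAt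
  · rw [interior_Ioo]
    intro ρ hρ
    rw [(slepF_hasDeriv p₁ p₂ hρ).deriv]
    exact slepK_pos p₂ ρ p₁ (by nlinarith [hρ.1, hρ.2])


/-- Slepian's inequality in the bivariate case: for a bivariate standard Gaussian
`(V₁, V₂)` with correlation `ρ` (realized as `V₁ = W₁`, `V₂ = ρ W₁ + √(1-ρ²) W₂` with
`W₁, W₂` independent standard normals), `P(V₁ ≤ p₁, V₂ ≤ p₂)` is strictly increasing
in `ρ`; consequently the probabilities of the regions `{V₁ ≤ p₁, V₂ ≤ p₂}` and
`{V₁ ≥ p₁, V₂ ≥ p₂}` uniquely determine `ρ`. -/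
theorem bivariate_gaussian_orthant_prob_strictMono (p₁ p₂ : ℝ) :
    StrictMonoOn (fun ρ : ℝ =>
      (((gaussianReal 0 1).prod (gaussianReal 0 1))
        {w : ℝ × ℝ | w.1 ≤ p₁ ∧ ρ * w.1 + Real.sqrt (1 - ρ^2) * w.2 ≤ p₂}).toReal)
      (Set.Ioo (-1 : ℝ) 1) ∧
    ∀ ρ ∈ Set.Ioo (-1 : ℝ) 1, ∀ ρ' ∈ Set.Ioo (-1 : ℝ) 1,
      (((gaussianReal 0 1).prod (gaussianReal 0 1))
          {w : ℝ × ℝ | w.1 ≤ p₁ ∧ ρ * w.1 + Real.sqrt (1 - ρ^2) * w.2 ≤ p₂}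
        = ((gaussianReal 0 1).prod (gaussianReal 0 1))
          {w : ℝ × ℝ | w.1 ≤ p₁ ∧ ρ' * w.1 + Real.sqrt (1 - ρ'^2) * w.2 ≤ p₂}) →
      (((gaussianReal 0 1).prod (gaussianReal 0 1))
          {w : ℝ × ℝ | p₁ ≤ w.1 ∧ p₂ ≤ ρ * w.1 + Real.sqrt (1 - ρ^2) * w.2}
        = ((gaussianReal 0 1).prod (gaussianReal 0 1))
          {w : ℝ × ℝ | p₁ ≤ w.1 ∧ p₂ ≤ ρ' * w.1 + Real.sqrt (1 - ρ'^2) * w.2}) →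
      ρ = ρ' := by
  have heq : ∀ ρ ∈ Set.Ioo (-1:ℝ) 1,
      (((gaussianReal 0 1).prod (gaussianReal 0 1))
        {w : ℝ × ℝ | w.1 ≤ p₁ ∧ ρ * w.1 + Real.sqrt (1 - ρ^2) * w.2 ≤ p₂}).toReal
      = ∫ x in Iic p₁, slepPhi ((p₂ - ρ*x)/Real.sqrt (1 - ρ^2)) * slepGd x := by
    intro ρ hρ
    have h0 : 0 < 1 - ρ^2 := by nlinarith [hρ.1, hρ.2]
    rw [slep_measure_eq p₁ p₂ ρ (Real.sqrt_pos.2 h0), ENNReal.toReal_ofReal]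
    exact setIntegral_nonneg measurableSet_Iic
      fun x _ => mul_nonneg (slepPhi_nonneg _) (slepGd_pos x).le
  have hmain : StrictMonoOn (fun ρ : ℝ =>
      (((gaussianReal 0 1).prod (gaussianReal 0 1))
        {w : ℝ × ℝ | w.1 ≤ p₁ ∧ ρ * w.1 + Real.sqrt (1 - ρ^2) * w.2 ≤ p₂}).toReal)
      (Set.Ioo (-1 : ℝ) 1) := by
    intro a ha b hb hab
    simp only
    rw [heq a ha, heq b hb]
    exact slepF_strictMono p₁ p₂ ha hb hab
  refine ⟨hmain, ?_⟩
  intro ρ hρ ρ' hρ' h1 _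
  exact hmain.injOn hρ hρ' (congrArg ENNReal.toReal h1)
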